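/- Assume τ ≠ 0, p ≠ 0, κ₁ ≠ κ₂, all diagonal entries rᵢ of R are nonzero, and the kernel of L is exactly the span of 1ₙ (L·v = 0 implies v is a scalar multiple of 1ₙ, and L·1ₙ = 0). Then the kernel of A − I_{3n} is one-dimensional and is spanned by ζ₁ = (1ₙ; 0ₙ; 0ₙ); i.e., the eigenvalue 1 of A has geometric multiplicity one. -/

import Mathlib

open Matrix

/-- The 3n×3n transition matrix of the skewless clock-synchronization algorithm. -/
noncomputable def Amat (n : ℕ) (τ κ₁ κ₂ p : ℝ) (L R : Matrix (Fin n) (Fin n) ℝ) :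
    Matrix (Fin n ⊕ Fin n ⊕ Fin n) (Fin n ⊕ Fin n ⊕ Fin n) ℝ :=
  Matrix.fromBlocks 1 (Matrix.fromCols (τ • R) 0)
    (Matrix.fromRows ((-κ₁) • L) ((-p) • L))
    (Matrix.fromBlocks 1 ((-κ₂) • (1 : Matrix (Fin n) (Fin n) ℝ)) 0
      ((1 - p) • (1 : Matrix (Fin n) (Fin n) ℝ)))

/-- The eigenvalue `1` of `A` has geometric multiplicity one: when `ker L = span{1ₙ}`,
`τ ≠ 0`, `p ≠ 0` and `κ₁ ≠ κ₂`, the kernel of `A − I₃ₙ` is exactly the span of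
`ζ₁ = (1ₙ; 0; 0)`. -/
theorem stmt6 (n : ℕ) (hn : 1 ≤ n) (τ κ₁ κ₂ p : ℝ)
    (hτ : τ ≠ 0) (hp : p ≠ 0) (hκ : κ₁ ≠ κ₂)
    (L : Matrix (Fin n) (Fin n) ℝ) (r : Fin n → ℝ) (hr : ∀ i, r i ≠ 0)
    (R : Matrix (Fin n) (Fin n) ℝ) (hR : R = Matrix.diagonal r)
    (hL1 : L *ᵥ (fun _ => (1 : ℝ)) = 0)
    (hker : ∀ v : Fin n → ℝ, L *ᵥ v = 0 → ∃ c : ℝ, v = fun _ => c) :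
    ∀ z : (Fin n ⊕ Fin n ⊕ Fin n) → ℝ,
      (Amat n τ κ₁ κ₂ p L R) *ᵥ z = z ↔
        ∃ c : ℝ, z = c • Sum.elim (fun _ => (1 : ℝ))
          (Sum.elim (fun _ => 0) (fun _ => 0)) := by
  intro z
  set x : Fin n → ℝ := fun i => z (Sum.inl i) with hx
  set y : Fin n → ℝ := fun i => z (Sum.inr (Sum.inl i)) with hy
  set w : Fin n → ℝ := fun i => z (Sum.inr (Sum.inr i)) with hw
  have hz : z = Sum.elim x (Sum.elim y w) := by
    funext i; rcases i with i | i | i <;> rfl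
  rw [hz]
  constructor
  · intro h
    rw [Amat, fromBlocks_mulVec] at h
    simp only [Sum.elim_comp_inl, Sum.elim_comp_inr] at h
    rw [fromCols_mulVec_sumElim, fromRows_mulVec, fromBlocks_mulVec] at h
    simp only [one_mulVec, zero_mulVec, add_zero, smul_mulVec] at h
    have h1 : x + τ • (R *ᵥ y) = x := by
      funext i; exact congrFun h (Sum.inl i)
    have h2 : ∀ i, (-κ₁) • (L *ᵥ x) i + (y i + ((-κ₂) • w) i) = y i := by
      intro i
      have := congrFun h (Sum.inr (Sum.inl i)); simpa using this
    have h3 : ∀ i, (-p) • (L *ᵥ x) i + ((1 - p) • w) i = w i := by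
      intro i
      have := congrFun h (Sum.inr (Sum.inr i)); simpa using this
    have hy0 : y = 0 := by
      have hRy : τ • (R *ᵥ y) = 0 := by
        have := congrArg (fun v => v - x) h1
        simpa [add_sub_cancel_left] using this
      funext i
      have : τ * (r i * y i) = 0 := by
        have := congrFun hRy i
        simpa [hR, mulVec_diagonal] using this
      rcases mul_eq_zero.mp this with h' | h'
      · exact absurd h' hτ
      rcases mul_eq_zero.mp h' with h'' | h''
      · exact absurd h'' (hr i)
      · simpa using h''
    -- from h3: -p (Lx)_i - p w_i = 0, so (Lx)_i = -w_i
    have hLxw : ∀ i, (L *ᵥ x) i = - w i := by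
      intro i
      have := h3 i
      simp only [Pi.smul_apply, smul_eq_mul] at this
      have h4 : p * (L *ᵥ x) i = p * (- w i) := by nlinarith
      exact mul_left_cancel₀ hp h4
    -- from h2: -κ₁ (Lx)_i - κ₂ w_i = 0 ⇒ κ₁ w_i - κ₂ w_i = 0 ⇒ w = 0
    have hw0 : w = 0 := by
      funext i
      have := h2 i
      simp only [Pi.smul_apply, smul_eq_mul, hLxw i] at this
      have : κ₁ * w i = κ₂ * w i := by nlinarith
      have hsub : (κ₁ - κ₂) * w i = 0 := by ring_nf; linarith
      rcases mul_eq_zero.mp hsub with h' | h'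
      · exact absurd (sub_eq_zero.mp h') hκ
      · simpa using h'
    have hLx : L *ᵥ x = 0 := by
      funext i; simpa [hw0] using hLxw i
    obtain ⟨c, hc⟩ := hker x hLx
    refine ⟨c, ?_⟩
    funext i
    rcases i with i | i | i <;>
      simp [hc, hy0, hw0]
  · rintro ⟨c, hc⟩
    rw [hc]
    rw [Amat, fromBlocks_mulVec]
    have e1 : (c • Sum.elim (fun _ : Fin n => (1:ℝ)) (Sum.elim (fun _ : Fin n => (0:ℝ)) fun _ : Fin n => (0:ℝ))) ∘ Sum.inl = fun _ => c := by
      funext i; simp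
    have e2 : (c • Sum.elim (fun _ : Fin n => (1:ℝ)) (Sum.elim (fun _ : Fin n => (0:ℝ)) fun _ : Fin n => (0:ℝ))) ∘ Sum.inr = Sum.elim (fun _ : Fin n => (0:ℝ)) (fun _ : Fin n => (0:ℝ)) := by
      funext i; rcases i with i | i <;> simp [Sum.elim_inl, Sum.elim_inr]
    rw [e1, e2, fromCols_mulVec_sumElim, fromRows_mulVec, fromBlocks_mulVec]
    have hLc : L *ᵥ (fun _ => c) = 0 := by
      have : (fun _ : Fin n => c) = c • (fun _ : Fin n => (1:ℝ)) := by funext i; simp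
      rw [this, mulVec_smul, hL1, smul_zero]
    funext i
    have h0 : (fun _ : Fin n => (0:ℝ)) = 0 := rfl
    rcases i with i | i | i <;>
      simp [h0, neg_mulVec, smul_mulVec, hLc, mulVec_zero, Function.comp]
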